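/- Let ε, x, y, z, x̃, ỹ, z̃ be real numbers satisfying the Kahan–Hirota–Kimura discretization relations of the flow E₁: x̃ - x = -2ε x x̃, ỹ - y = -ε(x̃ y + x ỹ), z̃ - z = 4ε y ỹ + ε(x̃ z + x z̃). If 1 - ε²x² ≠ 0 and 1 - ε²x̃² ≠ 0, then (z̃ x̃ + ỹ²)/(1 - ε²x̃²) = (z x + y²)/(1 - ε²x²); that is, K̂₁(ε)(x,y,z) = (z x + y²)/(1 - ε²x²) is an integral of motion of the discrete system dE₁. -/

import Mathlib

/-- The function `K̂₁(ε)(x,y,z) = (z x + y²)/(1 - ε²x²)` is an integral of motion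
of the Kahan–Hirota–Kimura discretization `dE₁` of the flow `E₁`. -/
theorem dE1_K1_integral (ε x y z x' y' z' : ℝ)
    (h1 : x' - x = -2*ε*x*x')
    (h2 : y' - y = -ε*(x'*y + x*y'))
    (h3 : z' - z = 4*ε*y*y' + ε*(x'*z + x*z'))
    (hd : 1 - ε^2*x^2 ≠ 0) (hd' : 1 - ε^2*x'^2 ≠ 0) :
    (z'*x' + y'^2)/(1 - ε^2*x'^2) = (z*x + y^2)/(1 - ε^2*x^2) := by
  have hpx : (1 + ε*x) ≠ 0 := by
    intro h; apply hd; linear_combination (1 - ε*x) * h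
  have hmx : (1 - ε*x) ≠ 0 := by
    intro h; apply hd; linear_combination (1 + ε*x) * h
  have hD : (1 + 2*ε*x) ≠ 0 := by
    intro h
    have hx0 : x = 0 := by
      have hA : x'*(1+2*ε*x) = x := by linear_combination h1
      rw [h, mul_zero] at hA; exact hA.symm
    rw [hx0] at h; norm_num at h
  have hA : x'*(1+2*ε*x) = x := by linear_combination h1
  have hxy : x'*y = x*y' :=
    mul_left_cancel₀ hpx (show (1+ε*x)*(x'*y) = (1+ε*x)*(x*y') by
      linear_combination y*h1 - x*h2)
  have hB : y'*(1+2*ε*x) = y := by linear_combination h2 - ε*hxy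
  have hC : z'*(1-ε*x)*(1+2*ε*x) = z*(1+3*ε*x) + 4*ε*y^2 := by
    linear_combination (1+2*ε*x)*h3 + 4*ε*y*hB + ε*z*hA
  rw [div_eq_div_iff hd' hd]
  have ex' : x' = x / (1+2*ε*x) := by rw [eq_div_iff hD]; linear_combination hA
  have ey' : y' = y / (1+2*ε*x) := by rw [eq_div_iff hD]; linear_combination hB
  have ez' : z' = (z*(1+3*ε*x) + 4*ε*y^2) / ((1-ε*x)*(1+2*ε*x)) := by
    rw [eq_div_iff (mul_ne_zero hmx hD)]; linear_combination hC
  rw [ex', ey', ez']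
  rw [div_mul_div_comm, div_pow, div_add_div _ _ (mul_ne_zero (mul_ne_zero hmx hD) hD) (pow_ne_zero 2 hD), div_mul_eq_mul_div, div_pow, mul_div_assoc', one_sub_div (pow_ne_zero 2 hD), mul_div_assoc', div_eq_div_iff (mul_ne_zero (mul_ne_zero (mul_ne_zero hmx hD) hD) (pow_ne_zero 2 hD)) (pow_ne_zero 2 hD)]
  ring
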